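/- arXiv:1504.03948 — 6 statements merged into one kernel-verified Lean document; each statement's English description precedes it below -/
import Mathlib

section
/- For every natural number r ≥ 1 and every positive integer n, Λ_r(n) ≥ 0, i.e., the generalized von Mangoldt function is nonnegative. -/
/-!
Write `Λ_r = μ * logʳ` as a Dirichlet convolution. Since `log (m n) = log m + log n`, pointwise
multiplication by `log` is a derivation of the Dirichlet ring; applying it to `logʳ = Λ_r * ζ`
and convolving with `μ` gives the recursion `Λ_{r+1} = log · Λ_r + Λ_r * Λ`. Starting from
`Λ_0 = μ * ζ = ε`, induction on `r` then shows that every `Λ_r` is nonnegative, because `log`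
and `Λ` are.
-/

/-- Generalized von Mangoldt function of order `r`:
`Λ_r(n) = ∑_{d ∣ n} μ(d) (log(n/d))^r`. -/
noncomputable def genVonMangoldt (r : ℕ) (n : ℕ) : ℝ :=
  ∑ d ∈ n.divisors, (ArithmeticFunction.moebius d : ℝ) * (Real.log ((n / d : ℕ) : ℝ)) ^ r

open scoped ArithmeticFunction.Moebius ArithmeticFunction.zeta

namespace ArithmeticFunction

variable {R : Type*}

theorem mul_apply_nonneg [Semiring R] [PartialOrder R] [IsOrderedRing R]
    {f g : ArithmeticFunction R} (hf : ∀ n, 0 ≤ f n) (hg : ∀ n, 0 ≤ g n) (n : ℕ) :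
    0 ≤ (f * g) n := by
  rw [mul_apply]
  exact Finset.sum_nonneg fun p _ => mul_nonneg (hf p.1) (hg p.2)

theorem pmul_mul_of_map_mul [CommSemiring R] {D : ArithmeticFunction R}
    (hD : ∀ {m n : ℕ}, m ≠ 0 → n ≠ 0 → D (m * n) = D m + D n) (f g : ArithmeticFunction R) :
    D.pmul (f * g) = D.pmul f * g + f * D.pmul g := by
  ext n
  simp only [pmul_apply, mul_apply, add_apply, Finset.mul_sum, ← Finset.sum_add_distrib]
  refine Finset.sum_congr rfl fun p hp => ?_
  obtain ⟨rfl, hn⟩ := Nat.mem_divisorsAntidiagonal.mp hp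
  rw [hD (left_ne_zero_of_mul hn) (right_ne_zero_of_mul hn)]
  ring

theorem log_pmul_mul (f g : ArithmeticFunction ℝ) :
    log.pmul (f * g) = log.pmul f * g + f * log.pmul g :=
  pmul_mul_of_map_mul (fun hm hn => by
    simp only [log_apply, Nat.cast_mul]
    exact Real.log_mul (Nat.cast_ne_zero.mpr hm) (Nat.cast_ne_zero.mpr hn)) f g

theorem log_ppow_apply {r n : ℕ} (hn : n ≠ 0) : log.ppow r n = Real.log n ^ r := by
  rcases Nat.eq_zero_or_pos r with rfl | hr
  · simp [hn]
  · rw [ppow_apply hr, log_apply]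

theorem moebius_mul_log_ppow_succ (r : ℕ) :
    (μ : ArithmeticFunction ℝ) * log.ppow (r + 1)
      = log.pmul ((μ : ArithmeticFunction ℝ) * log.ppow r) + (μ * log.ppow r) * Λ := by
  set F := (μ : ArithmeticFunction ℝ) * log.ppow r
  have hF : F * ζ = log.ppow r := by
    rw [mul_comm, ← mul_assoc, coe_zeta_mul_coe_moebius, one_mul]
  calc (μ : ArithmeticFunction ℝ) * log.ppow (r + 1)
      = μ * (log.pmul F * ζ) + μ * (F * log) := by
        rw [ppow_succ', ← hF, log_pmul_mul, pmul_zeta, mul_add]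
    _ = log.pmul F + F * Λ := by
        rw [mul_comm (μ : ArithmeticFunction ℝ), mul_assoc, coe_zeta_mul_coe_moebius, mul_one,
          mul_left_comm, moebius_mul_log_eq_vonMangoldt]

theorem moebius_mul_log_ppow_nonneg (r n : ℕ) :
    0 ≤ ((μ : ArithmeticFunction ℝ) * log.ppow r) n := by
  induction r generalizing n with
  | zero =>
    rw [ppow_zero, coe_moebius_mul_coe_zeta, one_apply]
    split_ifs <;> norm_num
  | succ r ih =>
    rw [moebius_mul_log_ppow_succ, add_apply, pmul_apply]
    exact add_nonneg (mul_nonneg (Real.log_natCast_nonneg n) (ih n))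
      (mul_apply_nonneg ih (fun _ => vonMangoldt_nonneg) n)

end ArithmeticFunction

open ArithmeticFunction in
theorem genVonMangoldt_eq_moebius_mul_log_ppow (r n : ℕ) :
    genVonMangoldt r n = ((μ : ArithmeticFunction ℝ) * log.ppow r) n := by
  rw [mul_apply,
    Nat.sum_divisorsAntidiagonal fun a b => (μ : ArithmeticFunction ℝ) a * log.ppow r b]
  refine Finset.sum_congr rfl fun d hd => ?_
  rw [intCoe_apply,
    log_ppow_apply (Nat.div_pos (Nat.divisor_le hd) (Nat.pos_of_mem_divisors hd)).ne']

theorem genVonMangoldt_nonneg_general (r : ℕ) (n : ℕ) :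
    0 ≤ genVonMangoldt r n := by
  rw [genVonMangoldt_eq_moebius_mul_log_ppow]
  exact ArithmeticFunction.moebius_mul_log_ppow_nonneg r n

theorem genVonMangoldt_nonneg (r : ℕ) (hr : 1 ≤ r) (n : ℕ) (hn : 0 < n) :
    0 ≤ genVonMangoldt r n :=
  genVonMangoldt_nonneg_general r n
end

section
/- For any natural number r ≥ 1, any positive reals R, Q, and any positive integer n, the following four-term partition holds: Λ_r(n) = ∑_{d | n, d ≤ R} μ(d)(log(n/d))^r − ∑_{lm | n, m ≤ R, l ≤ Q} μ(m)Λ_r(l) + ∑_{lm | n, l ≤ Q} μ(m)Λ_r(l) + ∑_{lm | n, m > R, l > Q} μ(m)Λ_r(l), where in the double sums l, m range over pairs of positive integers with lm dividing n. -/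
open ArithmeticFunction Finset
open scoped ArithmeticFunction.Moebius

theorem sum_divisors_genVonMangoldt (r : ℕ) {n : ℕ} (hn : n ≠ 0) :
    ∑ d ∈ n.divisors, genVonMangoldt r d = Real.log n ^ r := by
  refine (sum_eq_iff_sum_mul_moebius_eq (f := genVonMangoldt r)
    (g := fun n => Real.log n ^ r)).2 (fun m _ => ?_) n (Nat.pos_of_ne_zero hn)
  rw [Nat.sum_divisorsAntidiagonal (fun a b => (μ a : ℝ) * Real.log b ^ r)]
  rfl

theorem sum_filter_mul_dvd_eq_sum_sum_divisors_div {M : Type*} [AddCommMonoid M] (n : ℕ)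
    (p : ℕ → Prop) [DecidablePred p] (F : ℕ × ℕ → M) :
    ∑ q ∈ (n.divisors ×ˢ n.divisors).filter (fun q => q.1 * q.2 ∣ n ∧ p q.2), F q
      = ∑ m ∈ n.divisors.filter p, ∑ l ∈ (n / m).divisors, F (l, m) := by
  refine sum_finset_product_right _ _ _ fun ⟨l, m⟩ => ?_
  rcases eq_or_ne n 0 with rfl | hn
  · simp
  simp only [mem_filter, mem_product, Nat.mem_divisors]
  constructor
  · rintro ⟨⟨-, hm, -⟩, hlm, hp⟩
    exact ⟨⟨⟨hm, hn⟩, hp⟩, (Nat.dvd_div_iff_mul_dvd hm).2 (mul_comm l m ▸ hlm),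
      (Nat.div_ne_zero_iff_of_dvd hm).2 ⟨hn, ne_zero_of_dvd_ne_zero hn hm⟩⟩
  · rintro ⟨⟨⟨hm, -⟩, hp⟩, hl, -⟩
    have hml : m * l ∣ n := (Nat.dvd_div_iff_mul_dvd hm).1 hl
    exact ⟨⟨⟨(Dvd.intro_left m rfl).trans hml, hn⟩, hm, hn⟩, mul_comm l m ▸ hml, hp⟩

theorem sum_moebius_mul_genVonMangoldt_filter_mul_dvd (r n : ℕ) (p : ℕ → Prop)
    [DecidablePred p] :
    ∑ q ∈ (n.divisors ×ˢ n.divisors).filter (fun q => q.1 * q.2 ∣ n ∧ p q.2),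
        (μ q.2 : ℝ) * genVonMangoldt r q.1
      = ∑ d ∈ n.divisors.filter p, (μ d : ℝ) * Real.log ((n / d : ℕ) : ℝ) ^ r := by
  rw [sum_filter_mul_dvd_eq_sum_sum_divisors_div]
  refine sum_congr rfl fun m hm => ?_
  have hm := Nat.mem_divisors.1 (mem_filter.1 hm).1
  dsimp only
  rw [← mul_sum, sum_divisors_genVonMangoldt r
    ((Nat.div_ne_zero_iff_of_dvd hm.1).2 ⟨hm.2, ne_zero_of_dvd_ne_zero hm.2 hm.1⟩)]

theorem sum_filter_lt_add_sum_filter_le_and_le {α β M : Type*} [LinearOrder β]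
    [AddCommMonoid M] (s : Finset α) (D : α → Prop) [DecidablePred D] (a b : α → β) (R Q : β)
    (f : α → M) :
    ∑ x ∈ s.filter (fun x => D x ∧ R < a x), f x
        + ∑ x ∈ s.filter (fun x => D x ∧ a x ≤ R ∧ b x ≤ Q), f x
      = ∑ x ∈ s.filter (fun x => D x ∧ b x ≤ Q), f x
        + ∑ x ∈ s.filter (fun x => D x ∧ R < a x ∧ Q < b x), f x := by
  simp only [sum_filter, ← sum_add_distrib]
  refine sum_congr rfl fun x _ => ?_
  by_cases hD : D x <;> by_cases ha : R < a x <;> by_cases hb : b x ≤ Q <;>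
    simp [hD, ha, hb, not_le.2, not_lt.2]

open ArithmeticFunction in
theorem genVonMangoldt_four_term_partition_general (r : ℕ) (R Q : ℝ) (n : ℕ) :
    genVonMangoldt r n =
      (∑ d ∈ n.divisors.filter (fun d : ℕ => (d : ℝ) ≤ R),
          (ArithmeticFunction.moebius d : ℝ) * (Real.log ((n / d : ℕ) : ℝ)) ^ r)
      - (∑ q ∈ (n.divisors ×ˢ n.divisors).filter
            (fun q => q.1 * q.2 ∣ n ∧ (q.2 : ℝ) ≤ R ∧ (q.1 : ℝ) ≤ Q),
          (ArithmeticFunction.moebius q.2 : ℝ) * genVonMangoldt r q.1)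
      + (∑ q ∈ (n.divisors ×ˢ n.divisors).filter
            (fun q => q.1 * q.2 ∣ n ∧ (q.1 : ℝ) ≤ Q),
          (ArithmeticFunction.moebius q.2 : ℝ) * genVonMangoldt r q.1)
      + (∑ q ∈ (n.divisors ×ˢ n.divisors).filter
            (fun q => q.1 * q.2 ∣ n ∧ R < (q.2 : ℝ) ∧ Q < (q.1 : ℝ)),
          (ArithmeticFunction.moebius q.2 : ℝ) * genVonMangoldt r q.1) := by
  have split_at_R : genVonMangoldt r n =
      ∑ d ∈ n.divisors.filter (fun d : ℕ => (d : ℝ) ≤ R),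
          (μ d : ℝ) * Real.log ((n / d : ℕ) : ℝ) ^ r
      + ∑ d ∈ n.divisors.filter (fun d : ℕ => R < (d : ℝ)),
          (μ d : ℝ) * Real.log ((n / d : ℕ) : ℝ) ^ r := by
    simp only [genVonMangoldt, ← not_le]
    exact (sum_filter_add_sum_filter_not _ _ _).symm
  have tail := sum_moebius_mul_genVonMangoldt_filter_mul_dvd r n (fun m => R < (m : ℝ))
  have exchange := sum_filter_lt_add_sum_filter_le_and_le (n.divisors ×ˢ n.divisors)
    (fun q => q.1 * q.2 ∣ n) (fun q => (q.2 : ℝ)) (fun q => (q.1 : ℝ)) R Q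
    (fun q => (μ q.2 : ℝ) * genVonMangoldt r q.1)
  linarith

open ArithmeticFunction in
theorem genVonMangoldt_four_term_partition (r : ℕ) (hr : 1 ≤ r) (R Q : ℝ)
    (hR : 0 < R) (hQ : 0 < Q) (n : ℕ) (hn : 0 < n) :
    genVonMangoldt r n =
      (∑ d ∈ n.divisors.filter (fun d : ℕ => (d : ℝ) ≤ R),
          (ArithmeticFunction.moebius d : ℝ) * (Real.log ((n / d : ℕ) : ℝ)) ^ r)
      - (∑ q ∈ (n.divisors ×ˢ n.divisors).filter
            (fun q => q.1 * q.2 ∣ n ∧ (q.2 : ℝ) ≤ R ∧ (q.1 : ℝ) ≤ Q),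
          (ArithmeticFunction.moebius q.2 : ℝ) * genVonMangoldt r q.1)
      + (∑ q ∈ (n.divisors ×ˢ n.divisors).filter
            (fun q => q.1 * q.2 ∣ n ∧ (q.1 : ℝ) ≤ Q),
          (ArithmeticFunction.moebius q.2 : ℝ) * genVonMangoldt r q.1)
      + (∑ q ∈ (n.divisors ×ˢ n.divisors).filter
            (fun q => q.1 * q.2 ∣ n ∧ R < (q.2 : ℝ) ∧ Q < (q.1 : ℝ)),
          (ArithmeticFunction.moebius q.2 : ℝ) * genVonMangoldt r q.1) :=
  genVonMangoldt_four_term_partition_general r R Q n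
end

section
/- Let (a(n))_{n≥1} be a sequence of real numbers and let α, β, γ, c be constants with c > 0, α, β, γ ≥ 0 and α + β < γ < 1. Suppose: (i) a(n) = O(n^α); (ii) ∑_{n ≤ x} a(n) = O(x^β); (iii) ∑_{n ≤ x} a(n)^2 = c x + O(x^γ). Then the sequence a(n) changes sign infinitely often, i.e., for every N there exist m, n > N with a(m) > 0 and a(n) < 0. -/
open Filter Real

lemma aux_no_sign (a : ℕ → ℝ) (α β γ c : ℝ)
    (hc : 0 < c) (hα : 0 ≤ α) (hβ : 0 ≤ β) (hγ : 0 ≤ γ)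
    (hαβγ : α + β < γ) (hγ1 : γ < 1)
    (h1 : ∃ C : ℝ, ∀ n : ℕ, 1 ≤ n → |a n| ≤ C * (n : ℝ) ^ α)
    (h2 : ∃ C : ℝ, ∀ x : ℝ, 1 ≤ x →
      |∑ n ∈ Finset.Icc 1 ⌊x⌋₊, a n| ≤ C * x ^ β)
    (h3 : ∃ C : ℝ, ∀ x : ℝ, 1 ≤ x →
      |(∑ n ∈ Finset.Icc 1 ⌊x⌋₊, (a n) ^ 2) - c * x| ≤ C * x ^ γ)
    (N : ℕ) (hpos : ∀ n, N < n → 0 ≤ a n) : False := by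
  obtain ⟨C₁, h1⟩ := h1
  obtain ⟨C₂, h2⟩ := h2
  obtain ⟨C₃, h3⟩ := h3
  have hC₁ : 0 ≤ C₁ := by
    have := h1 1 le_rfl
    simp [Real.one_rpow] at this
    exact le_trans (abs_nonneg _) this
  have hC₂ : 0 ≤ C₂ := by
    have := h2 1 le_rfl
    simp [Real.one_rpow] at this
    exact le_trans (abs_nonneg _) this
  set K := ∑ n ∈ Finset.Icc 1 N, (a n) ^ 2 with hK
  set L := |∑ n ∈ Finset.Icc 1 N, a n| with hL
  have main : ∀ x : ℝ, (N : ℝ) + 1 ≤ x →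
      c * x ≤ C₃ * x ^ γ + K + C₁ * C₂ * x ^ (α + β) + C₁ * L * x ^ α := by
    intro x hx
    have hx1 : (1:ℝ) ≤ x := by
      have : (0:ℝ) ≤ (N:ℝ) := Nat.cast_nonneg N
      linarith
    have hx0 : 0 < x := lt_of_lt_of_le one_pos hx1
    have hNM : N + 1 ≤ ⌊x⌋₊ := Nat.le_floor (by push_cast; linarith)
    have hM : N ≤ ⌊x⌋₊ := le_trans (Nat.le_succ N) hNM
    have hMx : (⌊x⌋₊ : ℝ) ≤ x := Nat.floor_le hx0.le
    have hsplit : ∑ n ∈ Finset.Icc 1 ⌊x⌋₊, (a n) ^ 2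
        = K + ∑ n ∈ Finset.Ioc N ⌊x⌋₊, (a n) ^ 2 := by
      rw [hK, show Finset.Icc 1 ⌊x⌋₊ = Finset.Ioc 0 ⌊x⌋₊ from Finset.Icc_add_one_left_eq_Ioc 0 _,
        show Finset.Icc 1 N = Finset.Ioc 0 N from Finset.Icc_add_one_left_eq_Ioc 0 _,
        Finset.sum_Ioc_consecutive _ (Nat.zero_le N) hM]
    have hsplit2 : ∑ n ∈ Finset.Ioc N ⌊x⌋₊, a n
        = (∑ n ∈ Finset.Icc 1 ⌊x⌋₊, a n) - ∑ n ∈ Finset.Icc 1 N, a n := by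
      rw [show Finset.Icc 1 ⌊x⌋₊ = Finset.Ioc 0 ⌊x⌋₊ from Finset.Icc_add_one_left_eq_Ioc 0 _,
        show Finset.Icc 1 N = Finset.Ioc 0 N from Finset.Icc_add_one_left_eq_Ioc 0 _,
        ← Finset.sum_Ioc_consecutive _ (Nat.zero_le N) hM]
      ring
    have hP : 0 ≤ C₁ * x ^ α := mul_nonneg hC₁ (Real.rpow_nonneg hx0.le α)
    have hbd : ∑ n ∈ Finset.Ioc N ⌊x⌋₊, (a n) ^ 2
        ≤ (C₁ * x ^ α) * ∑ n ∈ Finset.Ioc N ⌊x⌋₊, a n := by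
      rw [Finset.mul_sum]
      apply Finset.sum_le_sum
      intro n hn
      obtain ⟨hn1, hn2⟩ := Finset.mem_Ioc.mp hn
      have ha := hpos n hn1
      have hle : a n ≤ C₁ * x ^ α := by
        calc a n ≤ |a n| := le_abs_self _
          _ ≤ C₁ * (n : ℝ) ^ α := h1 n (by omega)
          _ ≤ C₁ * x ^ α := by
              apply mul_le_mul_of_nonneg_left _ hC₁
              exact Real.rpow_le_rpow (Nat.cast_nonneg n)
                (le_trans (Nat.cast_le.mpr hn2) hMx) hα
      rw [sq]
      exact mul_le_mul_of_nonneg_right hle ha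
    have hsum : ∑ n ∈ Finset.Ioc N ⌊x⌋₊, a n ≤ C₂ * x ^ β + L := by
      rw [hsplit2]
      have h2x := h2 x hx1
      have := le_abs_self (∑ n ∈ Finset.Icc 1 ⌊x⌋₊, a n)
      have := neg_abs_le (∑ n ∈ Finset.Icc 1 N, a n)
      rw [hL]
      linarith
    have h3x := h3 x hx1
    rw [abs_le] at h3x
    have hT : ∑ n ∈ Finset.Ioc N ⌊x⌋₊, (a n) ^ 2
        ≤ (C₁ * x ^ α) * (C₂ * x ^ β + L) :=
      le_trans hbd (mul_le_mul_of_nonneg_left hsum hP)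
    have hrw : (C₁ * x ^ α) * (C₂ * x ^ β + L)
        = C₁ * C₂ * x ^ (α + β) + C₁ * L * x ^ α := by
      rw [Real.rpow_add hx0]; ring
    have h3x1 := h3x.1
    rw [hsplit] at h3x1
    linarith [hT, hrw ▸ hT]
  -- now take x → ∞
  have t1 : Tendsto (fun x : ℝ => x ^ (γ - 1)) atTop (nhds 0) := by
    simpa [neg_sub] using tendsto_rpow_neg_atTop (by linarith : (0:ℝ) < 1 - γ)
  have t0 : Tendsto (fun x : ℝ => x ^ (-1 : ℝ)) atTop (nhds 0) :=
    tendsto_rpow_neg_atTop one_pos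
  have t2 : Tendsto (fun x : ℝ => x ^ (α + β - 1)) atTop (nhds 0) := by
    simpa [neg_sub] using tendsto_rpow_neg_atTop (by linarith : (0:ℝ) < 1 - (α + β))
  have t3 : Tendsto (fun x : ℝ => x ^ (α - 1)) atTop (nhds 0) := by
    simpa [neg_sub] using tendsto_rpow_neg_atTop (by linarith : (0:ℝ) < 1 - α)
  have key : Tendsto (fun x : ℝ => C₃ * x ^ (γ - 1) + K * x ^ (-1 : ℝ)
      + C₁ * C₂ * x ^ (α + β - 1) + C₁ * L * x ^ (α - 1)) atTop (nhds 0) := by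
    have := (((t1.const_mul C₃).add (t0.const_mul K)).add
      (t2.const_mul (C₁ * C₂))).add (t3.const_mul (C₁ * L))
    simpa using this
  have hev : ∀ᶠ x : ℝ in atTop, C₃ * x ^ (γ - 1) + K * x ^ (-1 : ℝ)
      + C₁ * C₂ * x ^ (α + β - 1) + C₁ * L * x ^ (α - 1) < c :=
    key.eventually_lt_const hc
  obtain ⟨x, hxf, hxN⟩ := (hev.and (eventually_ge_atTop ((N : ℝ) + 1))).exists
  have hx1 : (1:ℝ) ≤ x := by
    have : (0:ℝ) ≤ (N:ℝ) := Nat.cast_nonneg N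
    linarith
  have hx0 : 0 < x := lt_of_lt_of_le one_pos hx1
  have hmain := main x hxN
  have heq : (C₃ * x ^ (γ - 1) + K * x ^ (-1 : ℝ)
      + C₁ * C₂ * x ^ (α + β - 1) + C₁ * L * x ^ (α - 1)) * x
      = C₃ * x ^ γ + K + C₁ * C₂ * x ^ (α + β) + C₁ * L * x ^ α := by
    rw [Real.rpow_sub hx0, Real.rpow_sub hx0, Real.rpow_sub hx0,
      Real.rpow_neg_one, Real.rpow_one]
    field_simp
  have hlt : (C₃ * x ^ (γ - 1) + K * x ^ (-1 : ℝ)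
      + C₁ * C₂ * x ^ (α + β - 1) + C₁ * L * x ^ (α - 1)) * x < c * x :=
    mul_lt_mul_of_pos_right hxf hx0
  rw [heq] at hlt
  linarith
theorem sign_changes_of_three_estimates (a : ℕ → ℝ) (α β γ c : ℝ)
    (hc : 0 < c) (hα : 0 ≤ α) (hβ : 0 ≤ β) (hγ : 0 ≤ γ)
    (hαβγ : α + β < γ) (hγ1 : γ < 1)
    (h1 : ∃ C : ℝ, ∀ n : ℕ, 1 ≤ n → |a n| ≤ C * (n : ℝ) ^ α)
    (h2 : ∃ C : ℝ, ∀ x : ℝ, 1 ≤ x →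
      |∑ n ∈ Finset.Icc 1 ⌊x⌋₊, a n| ≤ C * x ^ β)
    (h3 : ∃ C : ℝ, ∀ x : ℝ, 1 ≤ x →
      |(∑ n ∈ Finset.Icc 1 ⌊x⌋₊, (a n) ^ 2) - c * x| ≤ C * x ^ γ) :
    ∀ N : ℕ, ∃ m n : ℕ, N < m ∧ N < n ∧ 0 < a m ∧ a n < 0 := by
  intro N
  by_contra hcon
  push_neg at hcon
  by_cases hp : ∃ m : ℕ, N < m ∧ 0 < a m
  · -- then no negative after N, so a n ≥ 0 for n > N... careful
    obtain ⟨m, hm, ham⟩ := hp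
    have hnonneg : ∀ n, N < n → 0 ≤ a n := by
      intro n hn
      by_contra hneg
      push_neg at hneg
      have h := hcon m n
      exact absurd hneg (not_lt.mpr (h hm hn ham))
    exact absurd (aux_no_sign a α β γ c hc hα hβ hγ hαβγ hγ1 h1 h2 h3 N hnonneg)
      (by simp)
  · push_neg at hp
    have hnonneg : ∀ n, N < n → 0 ≤ (fun k => -a k) n := by
      intro n hn
      simpa using hp n hn
    obtain ⟨C₁, h1'⟩ := h1
    obtain ⟨C₂, h2'⟩ := h2
    obtain ⟨C₃, h3'⟩ := h3
    refine absurd (aux_no_sign (fun k => -a k) α β γ c hc hα hβ hγ hαβγ hγ1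
      ⟨C₁, fun n hn => by simpa using h1' n hn⟩
      ⟨C₂, fun x hx => by rw [Finset.sum_neg_distrib, abs_neg]; exact h2' x hx⟩
      ⟨C₃, fun x hx => by simpa using h3' x hx⟩ N hnonneg) (by simp)
end

section
/- Let (a(n))_{n≥1} be a sequence of real numbers, let 0 < δ < 1, and suppose there exist constants C₁, C₂, θ with θ < 1 and C₂ > 0 such that for all sufficiently large x: (i) |∑_{n ∈ S, x^δ < n ≤ x} a(n)| ≤ C₁ x^θ; (ii) ∑_{n ∈ S, x^δ < n ≤ x} a(n)^2 ≥ C₂ x / log x; (iii) |a(n)| ≤ C₁ n^α for all n ∈ S, with α + θ < 1, where S ⊆ ℕ. Then for all sufficiently large x there exist m, n ∈ S with x^δ < m, n ≤ x and a(m) > 0, a(n) < 0; in particular, a(n) changes sign infinitely often as n ranges over S, and the number of sign changes with n ≤ x is ≫ log x. -/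
open Finset Real Filter Asymptotics

set_option maxHeartbeats 4000000 in
theorem sign_changes_on_subset (a : ℕ → ℝ) (S : Set ℕ) [DecidablePred (· ∈ S)]
    (δ : ℝ) (hδ0 : 0 < δ) (hδ1 : δ < 1)
    (C₁ C₂ θ α : ℝ) (hθ : θ < 1) (hC₂ : 0 < C₂) (hαθ : α + θ < 1)
    (x₀ : ℝ)
    (h1 : ∀ x : ℝ, x₀ ≤ x →
      |∑ n ∈ (Finset.Icc 1 ⌊x⌋₊).filter (fun n => n ∈ S ∧ x ^ δ < (n : ℝ)), a n| ≤ C₁ * x ^ θ)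
    (h2 : ∀ x : ℝ, x₀ ≤ x →
      C₂ * x / Real.log x ≤
        ∑ n ∈ (Finset.Icc 1 ⌊x⌋₊).filter (fun n => n ∈ S ∧ x ^ δ < (n : ℝ)), (a n) ^ 2)
    (h3 : ∀ n ∈ S, |a n| ≤ C₁ * (n : ℝ) ^ α) :
    (∃ x₁ : ℝ, ∀ x : ℝ, x₁ ≤ x → ∃ m n : ℕ, m ∈ S ∧ n ∈ S ∧
        x ^ δ < (m : ℝ) ∧ (m : ℝ) ≤ x ∧ x ^ δ < (n : ℝ) ∧ (n : ℝ) ≤ x ∧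
        0 < a m ∧ a n < 0) ∧
    (∃ c : ℝ, 0 < c ∧ ∃ x₁ : ℝ, ∀ x : ℝ, x₁ ≤ x → ∃ k : ℕ,
        c * Real.log x ≤ (k : ℝ) ∧ ∃ u : ℕ → ℕ, StrictMonoOn u (Set.Iic k) ∧
          (∀ i ≤ k, u i ∈ S ∧ (u i : ℝ) ≤ x) ∧
          (∀ i < k, a (u i) * a (u (i + 1)) < 0)) := by
  classical
  set α' := max α 0 with hα'def
  set β := max θ 0 with hβdef
  have hβ0 : 0 ≤ β := le_max_right _ _
  have hα'0 : 0 ≤ α' := le_max_right _ _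
  set γ := min (α' + β) (2*β) with hγdef
  have hγ0 : 0 ≤ γ := le_min (by linarith) (by linarith)
  have hγ1 : γ < 1 := by
    rcases le_or_gt θ 0 with h | h
    · have : β = 0 := max_eq_right h
      exact lt_of_le_of_lt (min_le_right _ _) (by rw [this]; norm_num)
    · have hβθ : β = θ := max_eq_left h.le
      refine lt_of_le_of_lt (min_le_left _ _) ?_
      rcases le_or_gt α 0 with h' | h'
      · have : α' = 0 := max_eq_right h'
        rw [this, hβθ]; linarith
      · have : α' = α := max_eq_left h'.le
        rw [this, hβθ]; linarith
  -- C₁ ≥ 0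
  have hC₁ : 0 ≤ C₁ := by
    have hx : x₀ ≤ max x₀ 1 := le_max_left _ _
    have h := h1 (max x₀ 1) hx
    have hpos : (0:ℝ) < (max x₀ 1) ^ θ :=
      Real.rpow_pos_of_pos (lt_of_lt_of_le one_pos (le_max_right _ _)) θ
    nlinarith [abs_nonneg (∑ n ∈ (Finset.Icc 1 ⌊max x₀ 1⌋₊).filter
      (fun n => n ∈ S ∧ (max x₀ 1) ^ δ < (n : ℝ)), a n)]
  set N₁ : ℕ := ⌈max x₀ (Real.exp (2/(1-δ)))⌉₊ + 3 with hN₁def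
  have hN₁x₀ : x₀ ≤ (N₁:ℝ) := by
    have := Nat.le_ceil (max x₀ (Real.exp (2/(1-δ))))
    have h2 : ((⌈max x₀ (Real.exp (2/(1-δ)))⌉₊ : ℝ)) ≤ (N₁:ℝ) := by
      simp only [hN₁def]; push_cast; linarith
    calc x₀ ≤ max x₀ (Real.exp (2/(1-δ))) := le_max_left _ _
      _ ≤ _ := this.trans h2
  have hN₁log : 2/(1-δ) ≤ Real.log N₁ := by
    have h0 : Real.exp (2/(1-δ)) ≤ (N₁:ℝ) := by
      have := Nat.le_ceil (max x₀ (Real.exp (2/(1-δ))))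
      have h2 : ((⌈max x₀ (Real.exp (2/(1-δ)))⌉₊ : ℝ)) ≤ (N₁:ℝ) := by
        simp only [hN₁def]; push_cast; linarith
      calc Real.exp (2/(1-δ)) ≤ max x₀ (Real.exp (2/(1-δ))) := le_max_right _ _
        _ ≤ _ := this.trans h2
    calc 2/(1-δ) = Real.log (Real.exp (2/(1-δ))) := (Real.log_exp _).symm
      _ ≤ Real.log N₁ := Real.log_le_log (Real.exp_pos _) h0
  have hN₁3 : 3 ≤ N₁ := by simp [hN₁def]
  set φ : ℕ → ℝ := fun n => if n ∈ S then a n else 0 with hφdef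
  set ψ : ℕ → ℝ := fun n => if n ∈ S then (a n)^2 else 0 with hψdef
  set f : ℕ → ℝ := fun v => ∑ n ∈ Finset.Ioc 0 v, φ n with hfdef
  set C₀ : ℝ := ∑ n ∈ Finset.Ioc 0 N₁, |φ n| with hC₀def
  have hC₀0 : 0 ≤ C₀ := Finset.sum_nonneg fun n _ => abs_nonneg _
  set D : ℝ := 2*C₁ + C₀ with hDdef
  have hD0 : 0 ≤ D := by positivity
  set G : ℕ → ℝ := fun v => C₀ + D * (Real.log v + 1) * (v:ℝ)^β with hGdef
  have hlognat : ∀ v : ℕ, 0 ≤ Real.log v := by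
    intro v
    rcases Nat.eq_zero_or_pos v with h | h
    · simp [h]
    · exact Real.log_nonneg (by exact_mod_cast h)
  have hG0 : ∀ v : ℕ, 0 ≤ G v := by
    intro v
    have h1 := hlognat v
    have h2 : (0:ℝ) ≤ (v:ℝ)^β := Real.rpow_nonneg (by positivity) _
    simp only [hGdef]
    nlinarith [mul_nonneg (mul_nonneg hD0 (by linarith : (0:ℝ) ≤ Real.log v + 1)) h2]
  have hGmono : ∀ u v : ℕ, u ≤ v → G u ≤ G v := by
    intro u v huv
    simp only [hGdef]
    have h1 : Real.log u ≤ Real.log v := by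
      rcases Nat.eq_zero_or_pos u with h | h
      · simp [h]; exact hlognat v
      · exact Real.log_le_log (by exact_mod_cast h) (by exact_mod_cast huv)
    have h2 : (u:ℝ)^β ≤ (v:ℝ)^β :=
      Real.rpow_le_rpow (by positivity) (by exact_mod_cast huv) hβ0
    have h4 := hlognat u
    have h3 : (0:ℝ) ≤ (u:ℝ)^β := Real.rpow_nonneg (by positivity) _
    have h5 : D * (Real.log u + 1) * (u:ℝ)^β ≤ D * (Real.log v + 1) * (v:ℝ)^β := by
      apply mul_le_mul _ h2 h3 (by positivity)
      apply mul_le_mul_of_nonneg_left (by linarith) hD0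
    linarith
  set Q : ℕ → ℝ := fun v => min (C₁ * (v:ℝ)^α') (G v) * G v with hQdef
  have hQ0 : ∀ v : ℕ, 0 ≤ Q v := by
    intro v
    have h1 : 0 ≤ C₁ * (v:ℝ)^α' := by positivity
    exact mul_nonneg (le_min h1 (hG0 v)) (hG0 v)
  have hQmono : ∀ u v : ℕ, u ≤ v → Q u ≤ Q v := by
    intro u v huv
    simp only [hQdef]
    have h2 : (u:ℝ)^α' ≤ (v:ℝ)^α' :=
      Real.rpow_le_rpow (by positivity) (by exact_mod_cast huv) hα'0
    have hmin : min (C₁ * (u:ℝ)^α') (G u) ≤ min (C₁ * (v:ℝ)^α') (G v) :=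
      min_le_min (by nlinarith [Real.rpow_nonneg (show (0:ℝ) ≤ u by positivity) α']) (hGmono u v huv)
    have h1 : 0 ≤ C₁ * (u:ℝ)^α' := by positivity
    exact mul_le_mul hmin (hGmono u v huv) (hG0 u) (le_trans (le_min h1 (hG0 u)) hmin)
  -- representation of the hypothesis sums
  have hrepr : ∀ x : ℝ, 1 ≤ x →
      (Finset.Icc 1 ⌊x⌋₊).filter (fun n => n ∈ S ∧ x ^ δ < (n : ℝ)) =
      (Finset.Ioc ⌊x ^ δ⌋₊ ⌊x⌋₊).filter (· ∈ S) := by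
    intro x hx
    have hxδ0 : (0:ℝ) ≤ x ^ δ := by positivity
    have hxδ1 : (1:ℝ) ≤ x ^ δ := by
      calc (1:ℝ) = x ^ (0:ℝ) := (Real.rpow_zero x).symm
        _ ≤ x ^ δ := Real.rpow_le_rpow_of_exponent_le hx hδ0.le
    ext n
    simp only [Finset.mem_filter, Finset.mem_Icc, Finset.mem_Ioc]
    constructor
    · rintro ⟨⟨h1n, h2n⟩, hS, hlt⟩
      exact ⟨⟨(Nat.floor_lt hxδ0).mpr hlt, h2n⟩, hS⟩
    · rintro ⟨⟨hlt, hle⟩, hS⟩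
      have hn : x ^ δ < n := (Nat.floor_lt hxδ0).mp hlt
      have h1f : 1 ≤ ⌊x ^ δ⌋₊ := Nat.le_floor (by exact_mod_cast hxδ1)
      exact ⟨⟨by omega, hle⟩, hS, hn⟩
  have hf_sub : ∀ u v : ℕ, u ≤ v → f v - f u = ∑ n ∈ Finset.Ioc u v, φ n := by
    intro u v huv
    rw [hfdef]
    simp only
    rw [← Finset.sum_Ioc_consecutive φ (Nat.zero_le u) huv]
    ring
  -- h1 in nat form
  have hfloor_lt : ∀ v : ℕ, 2 ≤ v → ⌊(v:ℝ)^δ⌋₊ < v := by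
    intro v hv
    have h1 : ((v:ℝ))^δ < (v:ℝ) := by
      calc ((v:ℝ))^δ < (v:ℝ)^(1:ℝ) :=
        Real.rpow_lt_rpow_of_exponent_lt (by exact_mod_cast hv.trans_lt' one_lt_two) hδ1
      _ = v := Real.rpow_one _
    have h2 := Nat.floor_le (show (0:ℝ) ≤ (v:ℝ)^δ by positivity)
    exact_mod_cast h2.trans_lt h1
  have h1' : ∀ v : ℕ, N₁ ≤ v → |f v - f ⌊(v:ℝ)^δ⌋₊| ≤ C₁ * (v:ℝ)^β := by
    intro v hv
    have hv1 : (1:ℝ) ≤ (v:ℝ) := by exact_mod_cast le_trans (by omega : 1 ≤ N₁) hv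
    have hx := h1 (v:ℝ) (hN₁x₀.trans (by exact_mod_cast hv))
    rw [hrepr (v:ℝ) hv1, Nat.floor_natCast, Finset.sum_filter] at hx
    have hle : ⌊(v:ℝ)^δ⌋₊ ≤ v := (hfloor_lt v (by omega)).le
    rw [hf_sub _ _ hle]
    calc |∑ n ∈ Finset.Ioc ⌊(v:ℝ)^δ⌋₊ v, φ n| ≤ C₁ * (v:ℝ)^θ := hx
      _ ≤ C₁ * (v:ℝ)^β := mul_le_mul_of_nonneg_left
          (Real.rpow_le_rpow_of_exponent_le hv1 (le_max_left _ _)) hC₁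
  -- interval sums lemma
  have habs_base : ∀ u w : ℕ, u ≤ w → w ≤ N₁ → |f w - f u| ≤ C₀ := by
    intro u w huw hwN
    calc |f w - f u| ≤ ∑ n ∈ Finset.Ioc u w, |φ n| := by
          rw [hf_sub u w huw]; exact Finset.abs_sum_le_sum_abs _ _
      _ ≤ C₀ := by
          rw [hC₀def]
          exact Finset.sum_le_sum_of_subset_of_nonneg
            (Finset.Ioc_subset_Ioc (Nat.zero_le u) hwN) (fun _ _ _ => abs_nonneg _)
  have hI : ∀ v : ℕ, ∀ u : ℕ, u ≤ v → |f v - f u| ≤ G v := by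
    intro v
    induction v using Nat.strong_induction_on with
    | _ v IH =>
      intro u huv
      have hDT : 0 ≤ D * (Real.log v + 1) * (v:ℝ)^β := by
        have h1 := hlognat v
        have h2 : (0:ℝ) ≤ (v:ℝ)^β := Real.rpow_nonneg (by positivity) _
        have : (0:ℝ) ≤ D * (Real.log v + 1) := by nlinarith
        nlinarith
      rcases le_or_gt v N₁ with hvN | hvN
      · have := habs_base u v huv hvN
        simp only [hGdef]; linarith
      · set w := max u N₁ with hwdef
        have hwv : w ≤ v := max_le huv hvN.le
        have hwN : N₁ ≤ w := le_max_right _ _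
        set v' := ⌊(v:ℝ)^δ⌋₊ with hv'def
        set w' := ⌊(w:ℝ)^δ⌋₊ with hw'def
        have hv'v : v' < v := hfloor_lt v (by omega)
        have hw'v' : w' ≤ v' := Nat.floor_le_floor
          (Real.rpow_le_rpow (by positivity) (by exact_mod_cast hwv) hδ0.le)
        have hw'w : w' ≤ w := (hfloor_lt w (by omega)).le
        have e1 : |f v - f v'| ≤ C₁ * (v:ℝ)^β := h1' v hvN.le
        have e2 : |f w - f w'| ≤ C₁ * (w:ℝ)^β := h1' w hwN
        have e2' : C₁ * (w:ℝ)^β ≤ C₁ * (v:ℝ)^β := mul_le_mul_of_nonneg_left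
          (Real.rpow_le_rpow (by positivity) (by exact_mod_cast hwv) hβ0) hC₁
        have e3 : |f v' - f w'| ≤ G v' := IH v' hv'v w' hw'v'
        have e4 : |f w - f u| ≤ C₀ := by
          rcases le_or_gt u N₁ with h | h
          · have hw : w = N₁ := max_eq_right h
            rw [hw]; exact habs_base u N₁ h le_rfl
          · have hw : w = u := max_eq_left h.le
            rw [hw]; simpa using hC₀0
        have hv0 : (0:ℝ) < (v:ℝ) := by
          have : 0 < v := by omega
          exact_mod_cast this
        have hv1R : (1:ℝ) ≤ (v:ℝ) := by
          have : 1 ≤ v := by omega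
          exact_mod_cast this
        have hv'1 : 1 ≤ v' := by
          rw [hv'def]
          apply Nat.le_floor
          push_cast
          calc (1:ℝ) = (v:ℝ) ^ (0:ℝ) := (Real.rpow_zero _).symm
            _ ≤ (v:ℝ) ^ δ := Real.rpow_le_rpow_of_exponent_le hv1R hδ0.le
        have hlogv' : Real.log v' ≤ δ * Real.log v := by
          have ha : (v':ℝ) ≤ (v:ℝ)^δ := Nat.floor_le (by positivity)
          calc Real.log v' ≤ Real.log ((v:ℝ)^δ) :=
              Real.log_le_log (by exact_mod_cast hv'1) ha
            _ = δ * Real.log v := Real.log_rpow hv0 δ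
        have hv'β : (v':ℝ)^β ≤ (v:ℝ)^β :=
          Real.rpow_le_rpow (by positivity) (by exact_mod_cast hv'v.le) hβ0
        have hL : 2/(1-δ) ≤ Real.log v :=
          hN₁log.trans (Real.log_le_log (by positivity) (by exact_mod_cast hvN.le))
        have hL2 : 2 ≤ (1-δ) * Real.log v := by
          rw [div_le_iff₀ (by linarith)] at hL
          linarith
        have hVβ1 : (1:ℝ) ≤ (v:ℝ)^β := by
          calc (1:ℝ) = (v:ℝ) ^ (0:ℝ) := (Real.rpow_zero _).symm
            _ ≤ (v:ℝ) ^ β := Real.rpow_le_rpow_of_exponent_le hv1R hβ0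
        have hGv' : G v' ≤ C₀ + D*(δ*Real.log v + 1)*(v:ℝ)^β := by
          simp only [hGdef]
          have h0 : (0:ℝ) ≤ (v':ℝ)^β := Real.rpow_nonneg (by positivity) _
          have hd : D * (Real.log v' + 1) ≤ D * (δ*Real.log v + 1) :=
            mul_le_mul_of_nonneg_left (by linarith) hD0
          have hd0 : (0:ℝ) ≤ D * (Real.log v' + 1) := by
            have := hlognat v'
            nlinarith
          nlinarith [mul_le_mul hd hv'β h0 (le_trans hd0 hd)]
        have hsum : |f v - f u| ≤ C₁*(v:ℝ)^β + G v' + C₁*(w:ℝ)^β + C₀ := by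
          have d1 := abs_le.mp e1
          have d2 := abs_le.mp e2
          have d3 := abs_le.mp e3
          have d4 := abs_le.mp e4
          rw [abs_le]
          constructor <;> linarith
        have hfinal : C₁*(v:ℝ)^β + (C₀ + D*(δ*Real.log v + 1)*(v:ℝ)^β) + C₁*(v:ℝ)^β + C₀
            ≤ C₀ + D * (Real.log v + 1) * (v:ℝ)^β := by
          have hlogv0 : 0 ≤ Real.log v := hlognat v
          have key : 2*(D*(v:ℝ)^β) ≤ ((1-δ)*Real.log v)*(D*(v:ℝ)^β) := by
            have hDV : 0 ≤ D*(v:ℝ)^β := by positivity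
            nlinarith
          rw [hDdef] at key ⊢
          nlinarith
        have hGveq : G v = C₀ + D * (Real.log v + 1) * (v:ℝ)^β := by simp only [hGdef]
        linarith
  -- block lemma
  have hB : ∀ u v : ℕ, u ≤ v →
      ((∀ n ∈ Finset.Ioc u v, n ∈ S → 0 ≤ a n) ∨ (∀ n ∈ Finset.Ioc u v, n ∈ S → a n ≤ 0)) →
      ∑ n ∈ Finset.Ioc u v, ψ n ≤ Q v := by
    intro u v huv hsign
    set M := min (C₁ * (v:ℝ)^α') (G v) with hMdef
    have hM0 : 0 ≤ M := le_min (by positivity) (hG0 v)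
    have hMa : ∀ n ∈ Finset.Ioc u v, n ∈ S → |a n| ≤ M := by
      intro n hn hnS
      obtain ⟨hun, hnv⟩ := Finset.mem_Ioc.mp hn
      have hn1 : 1 ≤ n := by omega
      have hn1R : (1:ℝ) ≤ (n:ℝ) := by exact_mod_cast hn1
      apply le_min
      · calc |a n| ≤ C₁ * (n:ℝ)^α := h3 n hnS
          _ ≤ C₁ * (v:ℝ)^α' := by
            apply mul_le_mul_of_nonneg_left _ hC₁
            rcases le_or_gt 0 α with hα | hα
            · have hαα' : α' = α := max_eq_left hα
              rw [hαα']
              exact Real.rpow_le_rpow (by positivity) (by exact_mod_cast hnv) hα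
            · calc (n:ℝ)^α ≤ 1 := Real.rpow_le_one_of_one_le_of_nonpos hn1R hα.le
                _ ≤ (v:ℝ)^α' := by
                  calc (1:ℝ) = (v:ℝ)^(0:ℝ) := (Real.rpow_zero _).symm
                    _ ≤ (v:ℝ)^α' := Real.rpow_le_rpow_of_exponent_le
                        (by exact_mod_cast hn1.trans hnv) hα'0
      · have hsingle : Finset.Ioc (n-1) n = {n} := by
          ext m; simp only [Finset.mem_Ioc, Finset.mem_singleton]; omega
        have heq : f n - f (n-1) = a n := by
          rw [hf_sub (n-1) n (by omega), hsingle, Finset.sum_singleton]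
          simp only [hφdef, if_pos hnS]
        calc |a n| = |f n - f (n-1)| := by rw [heq]
          _ ≤ G n := hI n (n-1) (by omega)
          _ ≤ G v := hGmono n v hnv
    have hQveq : Q v = M * G v := by simp only [hQdef, hMdef]
    rw [hQveq]
    rcases hsign with hpos | hneg
    · have hterm : ∀ n ∈ Finset.Ioc u v, ψ n ≤ M * φ n := by
        intro n hn
        by_cases hnS : n ∈ S
        · have h0 : 0 ≤ a n := hpos n hn hnS
          have hle : a n ≤ M := (le_abs_self _).trans (hMa n hn hnS)
          simp only [hφdef, hψdef, if_pos hnS]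
          calc a n ^ 2 = a n * a n := sq (a n) ▸ by ring
            _ ≤ M * a n := mul_le_mul_of_nonneg_right hle h0
        · simp [hφdef, hψdef, hnS]
      calc ∑ n ∈ Finset.Ioc u v, ψ n ≤ ∑ n ∈ Finset.Ioc u v, M * φ n :=
            Finset.sum_le_sum hterm
        _ = M * (f v - f u) := by rw [← Finset.mul_sum, hf_sub u v huv]
        _ ≤ M * |f v - f u| := mul_le_mul_of_nonneg_left (le_abs_self _) hM0
        _ ≤ M * G v := mul_le_mul_of_nonneg_left (hI v u huv) hM0
    · have hterm : ∀ n ∈ Finset.Ioc u v, ψ n ≤ M * (-φ n) := by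
        intro n hn
        by_cases hnS : n ∈ S
        · have h0 : a n ≤ 0 := hneg n hn hnS
          have hle : -a n ≤ M := by
            have := hMa n hn hnS
            have habs : |a n| = -a n := abs_of_nonpos h0
            linarith
          simp only [hφdef, hψdef, if_pos hnS]
          calc a n ^ 2 = (-a n) * (-a n) := by ring
            _ ≤ M * (-a n) := mul_le_mul_of_nonneg_right hle (by linarith)
        · simp [hφdef, hψdef, hnS]
      calc ∑ n ∈ Finset.Ioc u v, ψ n ≤ ∑ n ∈ Finset.Ioc u v, M * (-φ n) :=
            Finset.sum_le_sum hterm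
        _ = M * (-(f v - f u)) := by
            rw [hf_sub u v huv, ← Finset.mul_sum, ← Finset.sum_neg_distrib]
        _ ≤ M * |f v - f u| := mul_le_mul_of_nonneg_left (neg_le_abs _) hM0
        _ ≤ M * G v := mul_le_mul_of_nonneg_left (hI v u huv) hM0
  -- both signs corollary
  have hBS : ∀ u v : ℕ, u ≤ v → Q v < ∑ n ∈ Finset.Ioc u v, ψ n →
      (∃ m, m ∈ Finset.Ioc u v ∧ m ∈ S ∧ 0 < a m) ∧
      (∃ n, n ∈ Finset.Ioc u v ∧ n ∈ S ∧ a n < 0) := by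
    intro u v huv hlt
    constructor
    · by_contra hcon
      push_neg at hcon
      have := hB u v huv (Or.inr fun n hn hnS => hcon n hn hnS)
      linarith
    · by_contra hcon
      push_neg at hcon
      have := hB u v huv (Or.inl fun n hn hnS => hcon n hn hnS)
      linarith
  -- chain lemma
  have hP : ∀ k : ℕ, ∀ u v : ℕ, u ≤ v → (2*(k:ℝ)+1) * Q v < ∑ n ∈ Finset.Ioc u v, ψ n →
      ∃ c : ℕ → ℕ, StrictMonoOn c (Set.Iic (k+1)) ∧
        (∀ i ≤ k+1, c i ∈ S ∧ c i ∈ Finset.Ioc u v) ∧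
        (∀ i < k+1, a (c i) * a (c (i+1)) < 0) := by
    intro k
    induction k with
    | zero =>
      intro u v huv hlt
      have hQv := hQ0 v
      norm_num at hlt
      obtain ⟨⟨m, hm, hmS, hma⟩, ⟨n, hn, hnS, hna⟩⟩ := hBS u v huv (by linarith)
      have hmn : m ≠ n := by rintro rfl; linarith
      obtain ⟨p, q, hpq, hpmem, hqmem, hpS, hqS, hsgn⟩ :
          ∃ p q : ℕ, p < q ∧ p ∈ Finset.Ioc u v ∧ q ∈ Finset.Ioc u v ∧ p ∈ S ∧ q ∈ S ∧
            a p * a q < 0 := by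
        rcases hmn.lt_or_gt with h | h
        · exact ⟨m, n, h, hm, hn, hmS, hnS, mul_neg_of_pos_of_neg hma hna⟩
        · exact ⟨n, m, h, hn, hm, hnS, hmS, mul_neg_of_neg_of_pos hna hma⟩
      refine ⟨fun i => if i = 0 then p else q, ?_, ?_, ?_⟩
      · intro i hi j hj hij
        simp only [Set.mem_Iic] at hi hj
        have hi0 : i = 0 := by omega
        have hj1 : j = 1 := by omega
        subst hi0; subst hj1
        simpa using hpq
      · intro i hi
        by_cases hi0 : i = 0 <;> simp [hi0, hpS, hqS, hpmem, hqmem]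
      · intro i hi
        have hi0 : i = 0 := by omega
        subst hi0
        simpa using hsgn
    | succ k IH =>
      intro u v huv hlt
      have hQv := hQ0 v
      push_cast at hlt
      have hk0 : (0:ℝ) ≤ (k:ℝ) := Nat.cast_nonneg k
      have hPv : Q v < ∑ n ∈ Finset.Ioc u v, ψ n := by nlinarith
      have hex : ∃ w, Q v < ∑ n ∈ Finset.Ioc u w, ψ n := ⟨v, hPv⟩
      set w := Nat.find hex with hwdef
      have hw : Q v < ∑ n ∈ Finset.Ioc u w, ψ n := Nat.find_spec hex
      have hwv : w ≤ v := Nat.find_min' hex hPv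
      have huw : u < w := by
        by_contra hcon
        push_neg at hcon
        have hemp : Finset.Ioc u w = ∅ := Finset.Ioc_eq_empty (by omega)
        rw [hemp] at hw
        simp at hw
        linarith
      have hw1 : ∑ n ∈ Finset.Ioc u (w-1), ψ n ≤ Q v := by
        have h9 := Nat.find_min hex (show w-1 < w by omega)
        exact not_lt.mp h9
      have hsingle : Finset.Ioc (w-1) w = {w} := by
        ext m; simp only [Finset.mem_Ioc, Finset.mem_singleton]; omega
      have hsplit : ∑ n ∈ Finset.Ioc u w, ψ n = ∑ n ∈ Finset.Ioc u (w-1), ψ n + ψ w := by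
        rw [← Finset.sum_Ioc_consecutive ψ (show u ≤ w-1 by omega) (show w-1 ≤ w by omega),
          hsingle, Finset.sum_singleton]
      have hψw : ψ w ≤ Q v := by
        have h9 : ∑ n ∈ Finset.Ioc (w-1) w, ψ n ≤ Q w := by
          apply hB (w-1) w (by omega)
          rcases le_or_gt 0 (a w) with h | h
          · left
            intro n hn hnS
            have : n = w := by simp only [Finset.mem_Ioc] at hn; omega
            rw [this]; exact h
          · right
            intro n hn hnS
            have : n = w := by simp only [Finset.mem_Ioc] at hn; omega
            rw [this]; exact h.le
        rw [hsingle, Finset.sum_singleton] at h9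
        exact h9.trans (hQmono w v hwv)
      have htail : (2*(k:ℝ)+1) * Q v < ∑ n ∈ Finset.Ioc w v, ψ n := by
        have hsplit2 : ∑ n ∈ Finset.Ioc u v, ψ n
            = ∑ n ∈ Finset.Ioc u w, ψ n + ∑ n ∈ Finset.Ioc w v, ψ n :=
          (Finset.sum_Ioc_consecutive ψ huw.le hwv).symm
        have hup : ∑ n ∈ Finset.Ioc u w, ψ n ≤ 2 * Q v := by rw [hsplit]; linarith
        linarith
      obtain ⟨c, hcmono, hcmem, hcalt⟩ := IH w v hwv htail
      obtain ⟨⟨m, hm, hmS, hma⟩, ⟨n, hn, hnS, hna⟩⟩ :=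
        hBS u w huw.le (lt_of_le_of_lt (hQmono w v hwv) hw)
      have hc01 := hcalt 0 (by omega)
      set m' := if 0 < a (c 0) then n else m with hm'def
      have hm'mem : m' ∈ Finset.Ioc u w := by rw [hm'def]; split <;> assumption
      have hm'S : m' ∈ S := by rw [hm'def]; split <;> assumption
      have hm'sign : a m' * a (c 0) < 0 := by
        by_cases h : 0 < a (c 0)
        · rw [hm'def, if_pos h]
          exact mul_neg_of_neg_of_pos hna h
        · have h0 : a (c 0) ≠ 0 := by
            intro he
            rw [he, zero_mul] at hc01
            exact absurd hc01 (lt_irrefl 0)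
          have hneg : a (c 0) < 0 := lt_of_le_of_ne (not_lt.mp h) h0
          rw [hm'def, if_neg h]
          exact mul_neg_of_pos_of_neg hma hneg
      have hm'lt : m' < c 0 := by
        have h1 := (Finset.mem_Ioc.mp (hcmem 0 (by omega)).2).1
        have h2 := (Finset.mem_Ioc.mp hm'mem).2
        omega
      refine ⟨fun i => if i = 0 then m' else c (i-1), ?_, ?_, ?_⟩
      · intro i hi j hj hij
        simp only [Set.mem_Iic] at hi hj
        by_cases hi0 : i = 0
        · subst hi0
          simp only [if_pos rfl, if_neg (show j ≠ 0 by omega)]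
          have hle : c 0 ≤ c (j-1) := by
            rcases Nat.eq_zero_or_pos (j-1) with h | h
            · rw [h]
            · exact (hcmono (Set.mem_Iic.mpr (Nat.zero_le _))
                (Set.mem_Iic.mpr (by omega)) h).le
          exact lt_of_lt_of_le hm'lt hle
        · have hj0 : j ≠ 0 := by omega
          simp only [if_neg hi0, if_neg hj0]
          exact hcmono (Set.mem_Iic.mpr (by omega)) (Set.mem_Iic.mpr (by omega)) (by omega)
      · intro i hi
        by_cases hi0 : i = 0
        · subst hi0
          simp only [if_pos rfl]
          refine ⟨hm'S, Finset.mem_Ioc.mpr ?_⟩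
          obtain ⟨ha1, ha2⟩ := Finset.mem_Ioc.mp hm'mem
          exact ⟨ha1, ha2.trans hwv⟩
        · simp only [if_neg hi0]
          refine ⟨(hcmem (i-1) (by omega)).1, Finset.mem_Ioc.mpr ?_⟩
          obtain ⟨ha1, ha2⟩ := Finset.mem_Ioc.mp (hcmem (i-1) (by omega)).2
          exact ⟨huw.trans ha1, ha2⟩
      · intro i hi
        by_cases hi0 : i = 0
        · subst hi0
          simpa using hm'sign
        · have h1 : i + 1 ≠ 0 := by omega
          simp only [if_neg hi0, if_neg h1]
          have := hcalt (i-1) (by omega)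
          have he : i - 1 + 1 = i := by omega
          rw [he] at this
          have he2 : i + 1 - 1 = i := by omega
          rw [he2]
          exact this
  -- eventual inequality
  have hEv : ∃ X : ℝ, (N₁:ℝ) + 1 ≤ X ∧ x₀ ≤ X ∧ Real.exp 3 ≤ X ∧
      ∀ x : ℝ, X ≤ x →
        (2*(⌊Real.log x⌋₊:ℝ)+1) * Q ⌊x⌋₊ < C₂ * x / Real.log x := by
    set E := (C₁ + C₀ + D + 1)^2 with hEdef
    have hE : 0 < E := by positivity
    have hQb : ∀ x : ℝ, (N₁:ℝ) ≤ x → Q ⌊x⌋₊ ≤ E * (Real.log x + 1)^2 * x^γ := by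
      intro x hxN
      have hx1 : (1:ℝ) ≤ x := le_trans (by exact_mod_cast (by omega : 1 ≤ N₁)) hxN
      have hx0 : (0:ℝ) < x := by linarith
      have hlx0 : 0 ≤ Real.log x := Real.log_nonneg hx1
      have hv1 : 1 ≤ ⌊x⌋₊ := Nat.le_floor (by exact_mod_cast hx1)
      have hvx : ((⌊x⌋₊:ℕ):ℝ) ≤ x := Nat.floor_le hx0.le
      have hvlog : Real.log ⌊x⌋₊ ≤ Real.log x :=
        Real.log_le_log (by exact_mod_cast hv1) hvx
      have hvβ : ((⌊x⌋₊:ℕ):ℝ)^β ≤ x^β := Real.rpow_le_rpow (by positivity) hvx hβ0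
      have hvα : ((⌊x⌋₊:ℕ):ℝ)^α' ≤ x^α' := Real.rpow_le_rpow (by positivity) hvx hα'0
      have hxβ1 : (1:ℝ) ≤ x^β := by
        calc (1:ℝ) = x ^ (0:ℝ) := (Real.rpow_zero _).symm
          _ ≤ x ^ β := Real.rpow_le_rpow_of_exponent_le hx1 hβ0
      have hxβ0 : (0:ℝ) ≤ x^β := by positivity
      have hxα0 : (0:ℝ) ≤ x^α' := by positivity
      have hGb : G ⌊x⌋₊ ≤ (C₀ + D) * (Real.log x + 1) * x^β := by
        have h1 : G ⌊x⌋₊ ≤ C₀ + D * (Real.log x + 1) * x^β := by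
          simp only [hGdef]
          have h2 : D * (Real.log ⌊x⌋₊ + 1) ≤ D * (Real.log x + 1) :=
            mul_le_mul_of_nonneg_left (by linarith) hD0
          have h3 : (0:ℝ) ≤ ((⌊x⌋₊:ℕ):ℝ)^β := by positivity
          have h4 : (0:ℝ) ≤ D * (Real.log ⌊x⌋₊ + 1) := by
            have := hlognat ⌊x⌋₊
            positivity
          nlinarith [mul_le_mul h2 hvβ h3 (h4.trans h2)]
        have h5 : C₀ ≤ C₀ * (Real.log x + 1) * x^β := by
          have h51 : (1:ℝ) ≤ (Real.log x + 1) * x^β := by nlinarith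
          nlinarith [mul_le_mul_of_nonneg_left h51 hC₀0]
        nlinarith
      have hGb0 : 0 ≤ (C₀ + D) * (Real.log x + 1) * x^β := by positivity
      rcases le_total (α' + β) (2*β) with h | h
      · have hγeq : γ = α' + β := min_eq_left h
        have hQ1 : Q ⌊x⌋₊ ≤ (C₁ * ((⌊x⌋₊:ℕ):ℝ)^α') * G ⌊x⌋₊ := by
          simp only [hQdef]
          exact mul_le_mul_of_nonneg_right (min_le_left _ _) (hG0 _)
        have hQ2 : Q ⌊x⌋₊ ≤ (C₁ * x^α') * ((C₀ + D) * (Real.log x + 1) * x^β) := by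
          calc Q ⌊x⌋₊ ≤ (C₁ * ((⌊x⌋₊:ℕ):ℝ)^α') * G ⌊x⌋₊ := hQ1
            _ ≤ (C₁ * x^α') * ((C₀ + D) * (Real.log x + 1) * x^β) := by
              apply mul_le_mul (mul_le_mul_of_nonneg_left hvα hC₁) hGb (hG0 _) (by positivity)
        have hxab : x^α' * x^β = x^γ := by
          rw [hγeq, ← Real.rpow_add hx0]
        calc Q ⌊x⌋₊ ≤ (C₁ * x^α') * ((C₀ + D) * (Real.log x + 1) * x^β) := hQ2
          _ = (C₁ * (C₀ + D)) * (Real.log x + 1) * (x^α' * x^β) := by ring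
          _ ≤ E * (Real.log x + 1)^2 * x^γ := by
            rw [hxab]
            have hxγ0 : (0:ℝ) ≤ x^γ := by positivity
            have hL1 : (0:ℝ) ≤ Real.log x + 1 := by linarith
            have hcoef : C₁ * (C₀ + D) * (Real.log x + 1) ≤ E * (Real.log x + 1)^2 := by
              have hE1 : C₁ * (C₀ + D) ≤ E := by rw [hEdef]; nlinarith
              calc C₁ * (C₀ + D) * (Real.log x + 1) ≤ E * (Real.log x + 1) :=
                    mul_le_mul_of_nonneg_right hE1 hL1
                _ ≤ E * (Real.log x + 1)^2 :=
                    mul_le_mul_of_nonneg_left (by nlinarith) hE.le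
            exact mul_le_mul_of_nonneg_right hcoef hxγ0
      · have hγeq : γ = 2*β := min_eq_right h
        have hQ1 : Q ⌊x⌋₊ ≤ G ⌊x⌋₊ * G ⌊x⌋₊ := by
          simp only [hQdef]
          exact mul_le_mul_of_nonneg_right (min_le_right _ _) (hG0 _)
        have hxab : x^β * x^β = x^γ := by
          rw [hγeq, ← Real.rpow_add hx0]; ring_nf
        calc Q ⌊x⌋₊ ≤ G ⌊x⌋₊ * G ⌊x⌋₊ := hQ1
          _ ≤ ((C₀ + D) * (Real.log x + 1) * x^β) * ((C₀ + D) * (Real.log x + 1) * x^β) :=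
            mul_le_mul hGb hGb (hG0 _) hGb0
          _ = ((C₀ + D))^2 * (Real.log x + 1)^2 * (x^β * x^β) := by ring
          _ ≤ E * (Real.log x + 1)^2 * x^γ := by
            rw [hxab]
            have hxγ0 : (0:ℝ) ≤ x^γ := by positivity
            have hE1 : (C₀ + D)^2 ≤ E := by rw [hEdef]; nlinarith
            have hcoef : (C₀ + D)^2 * (Real.log x + 1)^2 ≤ E * (Real.log x + 1)^2 :=
              mul_le_mul_of_nonneg_right hE1 (sq_nonneg _)
            exact mul_le_mul_of_nonneg_right hcoef hxγ0
    have h4γ : (0:ℝ) < 1 - γ := by linarith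
    have hlo := isLittleO_log_rpow_rpow_atTop (4:ℝ) h4γ
    have hc' : (0:ℝ) < C₂ / (24*E) := by positivity
    have hev : ∀ᶠ x : ℝ in atTop,
        (2*(⌊Real.log x⌋₊:ℝ)+1) * Q ⌊x⌋₊ < C₂ * x / Real.log x := by
      filter_upwards [hlo.def hc', eventually_ge_atTop (Real.exp 3),
        eventually_ge_atTop ((N₁:ℝ)), eventually_gt_atTop (0:ℝ)] with x hx1 hx2 hx3 hx4
      have hL3 : 3 ≤ Real.log x := by
        calc (3:ℝ) = Real.log (Real.exp 3) := (Real.log_exp _).symm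
          _ ≤ Real.log x := Real.log_le_log (Real.exp_pos _) hx2
      have hL0 : 0 < Real.log x := by linarith
      have hk : (⌊Real.log x⌋₊:ℝ) ≤ Real.log x := Nat.floor_le hL0.le
      have hxγ : (0:ℝ) < x ^ γ := Real.rpow_pos_of_pos hx4 _
      have hx1γ : (0:ℝ) < x ^ (1-γ) := Real.rpow_pos_of_pos hx4 _
      have hQbx := hQb x hx3
      have h14 : (Real.log x)^(4:ℕ) ≤ C₂/(24*E) * x^(1-γ) := by
        rw [Real.norm_eq_abs, Real.norm_eq_abs] at hx1
        rw [abs_of_pos (Real.rpow_pos_of_pos hL0 _), abs_of_pos hx1γ] at hx1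
        calc (Real.log x)^(4:ℕ) = Real.log x ^ ((4:ℕ):ℝ) := (Real.rpow_natCast _ 4).symm
          _ = Real.log x ^ (4:ℝ) := by norm_num
          _ ≤ C₂/(24*E) * x^(1-γ) := hx1
      rw [lt_div_iff₀ hL0]
      have e1 : (2*(⌊Real.log x⌋₊:ℝ)+1) ≤ 3 * Real.log x := by linarith
      have h2a : (Real.log x + 1)^2 ≤ 4*(Real.log x)^2 := by nlinarith
      have e2 : Q ⌊x⌋₊ ≤ 4*E*(Real.log x)^2 * x^γ := by
        calc Q ⌊x⌋₊ ≤ E * (Real.log x+1)^2 * x^γ := hQbx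
          _ ≤ 4*E*(Real.log x)^2 * x^γ := by
            nlinarith [mul_le_mul_of_nonneg_right
              (mul_le_mul_of_nonneg_left h2a hE.le) hxγ.le]
      have e3 : (2*(⌊Real.log x⌋₊:ℝ)+1) * Q ⌊x⌋₊ * Real.log x
          ≤ 12*E*(Real.log x)^4 * x^γ := by
        have h5 : (2*(⌊Real.log x⌋₊:ℝ)+1) * Q ⌊x⌋₊
            ≤ (3*Real.log x) * (4*E*(Real.log x)^2 * x^γ) :=
          mul_le_mul e1 e2 (hQ0 _) (by linarith)
        calc (2*(⌊Real.log x⌋₊:ℝ)+1) * Q ⌊x⌋₊ * Real.log x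
            ≤ (3*Real.log x) * (4*E*(Real.log x)^2 * x^γ) * Real.log x :=
              mul_le_mul_of_nonneg_right h5 hL0.le
          _ = 12*E*(Real.log x)^4 * x^γ := by ring
      have e4 : 12*E*(Real.log x)^4 * x^γ ≤ 12*E*(C₂/(24*E) * x^(1-γ)) * x^γ := by
        have h6 := mul_le_mul_of_nonneg_right
          (mul_le_mul_of_nonneg_left h14 (by positivity : (0:ℝ) ≤ 12*E)) hxγ.le
        calc 12*E*(Real.log x)^4 * x^γ = 12*E*(Real.log x)^(4:ℕ) * x^γ := by norm_num
          _ ≤ 12*E*(C₂/(24*E) * x^(1-γ)) * x^γ := h6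
      have hxx : x^(1-γ) * x^γ = x := by
        rw [← Real.rpow_add hx4]; norm_num
      have e5 : 12*E*(C₂/(24*E) * x^(1-γ)) * x^γ = C₂/2 * x := by
        have h7 : 12*E*(C₂/(24*E) * x^(1-γ)) * x^γ = (12*E*(C₂/(24*E))) * (x^(1-γ) * x^γ) := by
          ring
        rw [h7, hxx]
        have h8 : 12*E*(C₂/(24*E)) = C₂/2 := by
          field_simp
          ring
        rw [h8]
      nlinarith
    obtain ⟨X0, hX0⟩ := eventually_atTop.mp hev
    refine ⟨max (max ((N₁:ℝ)+1) X0) (max x₀ (Real.exp 3)), ?_, ?_, ?_, ?_⟩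
    · exact le_max_of_le_left (le_max_left _ _)
    · exact le_max_of_le_right (le_max_left _ _)
    · exact le_max_of_le_right (le_max_right _ _)
    · intro x hx
      exact hX0 x (le_trans (le_max_of_le_left (le_max_right _ _)) hx)
  obtain ⟨X, hXN, hXx₀, hXe, hX⟩ := hEv
  -- common work: for x ≥ X produce the chain
  have main : ∀ x : ℝ, X ≤ x → ∃ c : ℕ → ℕ, StrictMonoOn c (Set.Iic (⌊Real.log x⌋₊+1)) ∧
      (∀ i ≤ ⌊Real.log x⌋₊+1, c i ∈ S ∧ c i ∈ Finset.Ioc ⌊x ^ δ⌋₊ ⌊x⌋₊) ∧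
      (∀ i < ⌊Real.log x⌋₊+1, a (c i) * a (c (i+1)) < 0) := by
    intro x hx
    have hXx : (N₁:ℝ) + 1 ≤ x := hXN.trans hx
    have hN₁0 : (0:ℝ) ≤ (N₁:ℝ) := by positivity
    have hx1 : (1:ℝ) ≤ x := by linarith
    have h2x := h2 x (hXx₀.trans hx)
    rw [hrepr x hx1, Finset.sum_filter] at h2x
    rw [← hψdef] at h2x
    have hNv : N₁ ≤ ⌊x⌋₊ := Nat.le_floor (by linarith)
    have huv : ⌊x ^ δ⌋₊ ≤ ⌊x⌋₊ := by
      apply Nat.floor_le_floor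
      calc x ^ δ ≤ x ^ (1:ℝ) := Real.rpow_le_rpow_of_exponent_le hx1 hδ1.le
        _ = x := Real.rpow_one x
    have hXx2 := hX x hx
    exact hP ⌊Real.log x⌋₊ ⌊x ^ δ⌋₊ ⌊x⌋₊ huv (hXx2.trans_le h2x)
  have hfacts : ∀ x : ℝ, X ≤ x → ∀ i : ℕ, i ∈ Finset.Ioc ⌊x ^ δ⌋₊ ⌊x⌋₊ →
      x ^ δ < (i:ℝ) ∧ (i:ℝ) ≤ x := by
    intro x hx i hi
    have hXx : (N₁:ℝ) + 1 ≤ x := hXN.trans hx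
    have hN₁0 : (0:ℝ) ≤ (N₁:ℝ) := by positivity
    have hx1 : (1:ℝ) ≤ x := by linarith
    obtain ⟨hi1, hi2⟩ := Finset.mem_Ioc.mp hi
    constructor
    · exact (Nat.floor_lt (by positivity)).mp hi1
    · calc (i:ℝ) ≤ (⌊x⌋₊:ℝ) := by exact_mod_cast hi2
        _ ≤ x := Nat.floor_le (by linarith)
  constructor
  · refine ⟨X, fun x hx => ?_⟩
    obtain ⟨c, hmono, hmem, halt⟩ := main x hx
    have h01 := halt 0 (by omega)
    have hm0 := hmem 0 (by omega)
    have hm1 := hmem 1 (by omega)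
    have hf0 := hfacts x hx (c 0) hm0.2
    have hf1 := hfacts x hx (c 1) hm1.2
    rcases mul_neg_iff.mp h01 with ⟨hp, hn⟩ | ⟨hn, hp⟩
    · exact ⟨c 0, c 1, hm0.1, hm1.1, hf0.1, hf0.2, hf1.1, hf1.2, hp, hn⟩
    · exact ⟨c 1, c 0, hm1.1, hm0.1, hf1.1, hf1.2, hf0.1, hf0.2, hp, hn⟩
  · refine ⟨1, one_pos, X, fun x hx => ?_⟩
    obtain ⟨c, hmono, hmem, halt⟩ := main x hx
    refine ⟨⌊Real.log x⌋₊ + 1, ?_, c, hmono, ?_, halt⟩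
    · push_cast
      nlinarith [Nat.lt_floor_add_one (Real.log x)]
    · intro i hi
      exact ⟨(hmem i hi).1, (hfacts x hx (c i) (hmem i hi).2).2⟩
end

section
/- For every natural number r ≥ 1 and complex s with Re(s) > 1, the Dirichlet series identity (−1)^r ζ^{(r)}(s)/ζ(s) = ∑_{n=1}^∞ Λ_r(n) n^{−s} holds, where ζ^{(r)} denotes the r-th derivative of the Riemann zeta function. -/
open LSeries LSeries.notation Complex in
private lemma logMul_iterate_one (r n : ℕ) :
    (logMul^[r] (1 : ℕ → ℂ)) n = (Complex.log n) ^ r := by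
  induction r with
  | zero => simp
  | succ m ih =>
    rw [Function.iterate_succ', Function.comp_apply, logMul, ih, pow_succ, mul_comm]

theorem neg_one_pow_zeta_deriv_div_zeta (r : ℕ) (hr : 1 ≤ r) (s : ℂ) (hs : 1 < s.re) :
    (-1 : ℂ) ^ r * iteratedDeriv r riemannZeta s / riemannZeta s =
      ∑' n : ℕ, (genVonMangoldt r n : ℂ) * (n : ℂ) ^ (-s) := by
  open LSeries LSeries.notation Complex ArithmeticFunction in
  have habs1 : abscissaOfAbsConv (1 : ℕ → ℂ) < s.re := by
    rw [abscissaOfAbsConv_one]; exact_mod_cast hs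
  -- iterated derivative of zeta
  have hzeta : iteratedDeriv r riemannZeta s
      = (-1 : ℂ) ^ r * LSeries (logMul^[r] (1 : ℕ → ℂ)) s := by
    have heq : Set.EqOn riemannZeta (LSeries (1 : ℕ → ℂ)) {z : ℂ | 1 < z.re} :=
      fun z hz ↦ (LSeries_one_eq_riemannZeta hz).symm
    have hopen : IsOpen {z : ℂ | 1 < z.re} := isOpen_lt continuous_const Complex.continuous_re
    rw [heq.iteratedDeriv_of_isOpen hopen r hs, LSeries_iteratedDeriv r habs1]
  -- summability
  have hgsum : LSeriesSummable (logMul^[r] (1 : ℕ → ℂ)) s :=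
    LSeriesSummable_of_abscissaOfAbsConv_lt_re (by rwa [LSeries.absicssaOfAbsConv_logPowMul])
  have hmusum : LSeriesSummable (↗ArithmeticFunction.moebius) s :=
    ArithmeticFunction.LSeriesSummable_moebius_iff.mpr hs
  -- the RHS is an L-series
  have hconv : ∀ n : ℕ, ((↗ArithmeticFunction.moebius) ⍟ (logMul^[r] (1 : ℕ → ℂ))) n
      = (genVonMangoldt r n : ℂ) := by
    intro n
    simp only [convolution_def]
    rw [Nat.sum_divisorsAntidiagonal
      (f := fun i j ↦ (ArithmeticFunction.moebius i : ℂ) * (logMul^[r] (1 : ℕ → ℂ)) j),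
      genVonMangoldt]
    push_cast
    refine Finset.sum_congr rfl fun d hd ↦ ?_
    rw [logMul_iterate_one]
  have hRHS : (∑' n : ℕ, (genVonMangoldt r n : ℂ) * (n : ℂ) ^ (-s))
      = LSeries ((↗ArithmeticFunction.moebius) ⍟ (logMul^[r] (1 : ℕ → ℂ))) s := by
    rw [LSeries]
    refine tsum_congr fun n ↦ ?_
    rcases eq_or_ne n 0 with rfl | hn
    · simp [term_zero, genVonMangoldt]
    · rw [term_of_ne_zero hn, hconv, Complex.cpow_neg, div_eq_mul_inv]
  rw [hRHS, LSeries_convolution' hmusum hgsum, hzeta]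
  have hμ : LSeries (↗ArithmeticFunction.moebius) s = (riemannZeta s)⁻¹ := by
    have h1 := LSeries_one_mul_Lseries_moebius hs
    rw [LSeries_one_eq_riemannZeta hs] at h1
    exact eq_inv_of_mul_eq_one_left (by linear_combination h1)
  rw [hμ, ← mul_assoc, ← mul_pow, neg_mul_neg, one_mul, one_pow, one_mul]
  ring
end

section
/- Suppose (a(p))_p, indexed by primes, is a sequence of reals such that: (i) ∑_{p ≤ x} a(p) = O(x^{155/156 + ε}) for every ε > 0, and (ii) ∑_{p ≤ x} a(p)² ≫ x^{1−ε'} for some ε' with 0 < ε' < 1/156, and (iii) a(p) = O(p^ε) for every ε > 0. Then a(p) changes sign infinitely often as p runs over primes. -/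
theorem sign_changes_over_primes (a : ℕ → ℝ)
    (h1 : ∀ ε : ℝ, 0 < ε → ∃ C : ℝ, ∀ x : ℝ, 2 ≤ x →
      |∑ p ∈ (Finset.Icc 1 ⌊x⌋₊).filter Nat.Prime, a p| ≤ C * x ^ ((155 : ℝ) / 156 + ε))
    (h2 : ∃ ε' : ℝ, 0 < ε' ∧ ε' < 1 / 156 ∧ ∃ c : ℝ, 0 < c ∧ ∃ x₀ : ℝ,
      ∀ x : ℝ, x₀ ≤ x →
        c * x ^ (1 - ε') ≤ ∑ p ∈ (Finset.Icc 1 ⌊x⌋₊).filter Nat.Prime, (a p) ^ 2)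
    (h3 : ∀ ε : ℝ, 0 < ε → ∃ C : ℝ, ∀ p : ℕ, p.Prime → |a p| ≤ C * (p : ℝ) ^ ε) :
    ∀ N : ℕ, ∃ p q : ℕ, p.Prime ∧ q.Prime ∧ N < p ∧ N < q ∧ 0 < a p ∧ a q < 0 := by
  intro N
  by_contra hcon
  push_neg at hcon
  -- There is a constant sign s ∈ {1, -1} for all primes p > N
  obtain ⟨s, hs1, hsign⟩ : ∃ s : ℝ, |s| = 1 ∧ ∀ p, p.Prime → N < p → 0 ≤ s * a p := by
    by_cases hc : ∃ p, p.Prime ∧ N < p ∧ 0 < a p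
    · obtain ⟨p, hp, hNp, hap⟩ := hc
      refine ⟨1, abs_one, fun q hq hNq => ?_⟩
      have := hcon p q hp hq hNp hNq hap
      simpa using this
    · push_neg at hc
      refine ⟨-1, by norm_num, fun q hq hNq => ?_⟩
      have := hc q hq hNq
      nlinarith
  obtain ⟨ε', hε'0, hε'1, c, hc0, x₀, h2'⟩ := h2
  set ε : ℝ := (1 / 156 - ε') / 3 with hεdef
  have hε : 0 < ε := by rw [hεdef]; linarith
  obtain ⟨C1, hC1⟩ := h1 ε hε
  obtain ⟨C3, hC3⟩ := h3 ε hε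
  set γ : ℝ := (155 : ℝ) / 156 + ε with hγdef
  set A : ℝ := ∑ p ∈ (Finset.Icc 1 N).filter Nat.Prime, (a p) ^ 2 with hAdef
  set B : ℝ := |∑ p ∈ (Finset.Icc 1 N).filter Nat.Prime, a p| with hBdef
  have hA : 0 ≤ A := Finset.sum_nonneg fun p _ => sq_nonneg _
  have hB : 0 ≤ B := abs_nonneg _
  set D : ℝ := A + |C3| * |C1| + |C3| * B with hDdef
  have hD : 0 ≤ D := by positivity
  -- choose a large x
  have hev1 : ∀ᶠ x : ℝ in Filter.atTop, D / c < x ^ ε :=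
    (tendsto_rpow_atTop hε).eventually_gt_atTop (D / c)
  have hev2 : ∀ᶠ x : ℝ in Filter.atTop, max (max 2 x₀) ((N : ℝ) + 1) ≤ x :=
    Filter.eventually_ge_atTop _
  obtain ⟨x, hxD, hxge⟩ := (hev1.and hev2).exists
  have hx2 : (2 : ℝ) ≤ x := le_trans (le_trans (le_max_left _ _) (le_max_left _ _)) hxge
  have hx0' : x₀ ≤ x := le_trans (le_trans (le_max_right _ _) (le_max_left _ _)) hxge
  have hxN : (N : ℝ) + 1 ≤ x := le_trans (le_max_right _ _) hxge
  have hx0 : (0 : ℝ) < x := by linarith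
  have hx1 : (1 : ℝ) ≤ x := by linarith
  have hNfloor : N + 1 ≤ ⌊x⌋₊ := Nat.le_floor (by exact_mod_cast hxN)
  set T := (Finset.Icc 1 ⌊x⌋₊).filter Nat.Prime with hT
  set T₁ := T.filter (fun p => p ≤ N) with hT₁
  set T₂ := T.filter (fun p => ¬ p ≤ N) with hT₂
  have hT₁eq : T₁ = (Finset.Icc 1 N).filter Nat.Prime := by
    ext p
    simp only [hT₁, hT, Finset.mem_filter, Finset.mem_Icc]
    constructor
    · rintro ⟨⟨⟨h1p, h2p⟩, hp⟩, h3p⟩; exact ⟨⟨h1p, h3p⟩, hp⟩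
    · rintro ⟨⟨h1p, h3p⟩, hp⟩; exact ⟨⟨⟨h1p, le_trans h3p (by omega)⟩, hp⟩, h3p⟩
  have hsplit : ∀ f : ℕ → ℝ, ∑ p ∈ T₁, f p + ∑ p ∈ T₂, f p = ∑ p ∈ T, f p :=
    fun f => Finset.sum_filter_add_sum_filter_not T _ f
  have hM : (0 : ℝ) ≤ |C3| * x ^ ε := by positivity
  -- pointwise bound on T₂
  have key2 : ∀ p ∈ T₂, (a p) ^ 2 ≤ (|C3| * x ^ ε) * (s * a p) := by
    intro p hp
    simp only [hT₂, hT, Finset.mem_filter, Finset.mem_Icc, not_le] at hp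
    obtain ⟨⟨⟨hp1, hp2⟩, hpp⟩, hpN⟩ := hp
    have hple : (p : ℝ) ≤ x := le_trans (Nat.cast_le.mpr hp2) (Nat.floor_le hx0.le)
    have h0sa : 0 ≤ s * a p := hsign p hpp hpN
    have hsa : s * a p ≤ |C3| * x ^ ε := by
      calc s * a p ≤ |s * a p| := le_abs_self _
        _ = |a p| := by rw [abs_mul, hs1, one_mul]
        _ ≤ C3 * (p : ℝ) ^ ε := hC3 p hpp
        _ ≤ |C3| * (p : ℝ) ^ ε :=
            mul_le_mul_of_nonneg_right (le_abs_self _) (Real.rpow_nonneg (Nat.cast_nonneg p) ε)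
        _ ≤ |C3| * x ^ ε :=
            mul_le_mul_of_nonneg_left
              (Real.rpow_le_rpow (Nat.cast_nonneg p) hple hε.le) (abs_nonneg _)
    have hsq : (a p) ^ 2 = (s * a p) ^ 2 := by
      have hs2 : s ^ 2 = 1 := by rw [← sq_abs, hs1, one_pow]
      rw [mul_pow, hs2, one_mul]
    rw [hsq, sq]
    exact mul_le_mul_of_nonneg_right hsa h0sa
  have key : ∑ p ∈ T₂, (a p) ^ 2 ≤ (|C3| * x ^ ε) * ∑ p ∈ T₂, (s * a p) := by
    rw [Finset.mul_sum]
    exact Finset.sum_le_sum key2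
  -- bound the signed sum over T₂
  have hS : |∑ p ∈ T, a p| ≤ |C1| * x ^ γ := by
    calc |∑ p ∈ T, a p| ≤ C1 * x ^ ((155 : ℝ) / 156 + ε) := hC1 x hx2
      _ ≤ |C1| * x ^ ((155 : ℝ) / 156 + ε) :=
          mul_le_mul_of_nonneg_right (le_abs_self _) (Real.rpow_nonneg hx0.le _)
      _ = |C1| * x ^ γ := by rw [hγdef]
  have hST2 : ∑ p ∈ T₂, s * a p ≤ |C1| * x ^ γ + B := by
    have heq : ∑ p ∈ T₂, s * a p = s * (∑ p ∈ T, a p - ∑ p ∈ T₁, a p) := by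
      rw [← Finset.mul_sum]
      congr 1
      have := hsplit a
      linarith
    rw [heq]
    calc s * (∑ p ∈ T, a p - ∑ p ∈ T₁, a p) ≤ |s * (∑ p ∈ T, a p - ∑ p ∈ T₁, a p)| :=
          le_abs_self _
      _ = |∑ p ∈ T, a p - ∑ p ∈ T₁, a p| := by rw [abs_mul, hs1, one_mul]
      _ ≤ |∑ p ∈ T, a p| + |∑ p ∈ T₁, a p| := by
          rw [sub_eq_add_neg]
          exact (abs_add_le _ _).trans_eq (by rw [abs_neg])
      _ = |∑ p ∈ T, a p| + B := by rw [hT₁eq, hBdef]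
      _ ≤ |C1| * x ^ γ + B := by linarith
  -- total bound
  have hsum_sq : c * x ^ (1 - ε') ≤ ∑ p ∈ T, (a p) ^ 2 := h2' x hx0'
  have htotal : ∑ p ∈ T, (a p) ^ 2 ≤ A + (|C3| * x ^ ε) * (|C1| * x ^ γ + B) := by
    rw [← hsplit (fun p => (a p) ^ 2)]
    have hA' : ∑ p ∈ T₁, (a p) ^ 2 = A := by rw [hT₁eq]
    have h2'' : ∑ p ∈ T₂, (a p) ^ 2 ≤ (|C3| * x ^ ε) * (|C1| * x ^ γ + B) :=
      le_trans key (mul_le_mul_of_nonneg_left hST2 hM)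
    linarith
  -- arithmetic with exponents
  have hxε : (0 : ℝ) < x ^ ε := Real.rpow_pos_of_pos hx0 _
  have hxγε : (0 : ℝ) < x ^ (γ + ε) := Real.rpow_pos_of_pos hx0 _
  have e1 : x ^ ε * x ^ γ = x ^ (γ + ε) := by
    rw [← Real.rpow_add hx0]
    ring_nf
  have hexp : x ^ (1 - ε') = x ^ (γ + ε) * x ^ ε := by
    rw [← Real.rpow_add hx0]
    congr 1
    rw [hγdef, hεdef]; ring
  have hone : (1 : ℝ) ≤ x ^ (γ + ε) := by
    have : x ^ (0 : ℝ) ≤ x ^ (γ + ε) := by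
      apply Real.rpow_le_rpow_of_exponent_le hx1
      rw [hγdef]; linarith
    simpa using this
  have hmono1 : x ^ ε ≤ x ^ (γ + ε) := by
    apply Real.rpow_le_rpow_of_exponent_le hx1
    rw [hγdef]; linarith
  have hchain : c * x ^ (1 - ε') ≤ D * x ^ (γ + ε) := by
    calc c * x ^ (1 - ε') ≤ A + (|C3| * x ^ ε) * (|C1| * x ^ γ + B) :=
          le_trans hsum_sq htotal
      _ = A + |C3| * |C1| * (x ^ ε * x ^ γ) + |C3| * B * x ^ ε := by ring
      _ = A + |C3| * |C1| * x ^ (γ + ε) + |C3| * B * x ^ ε := by rw [e1]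
      _ ≤ A * x ^ (γ + ε) + |C3| * |C1| * x ^ (γ + ε) + |C3| * B * x ^ (γ + ε) := by
          have t1 : A ≤ A * x ^ (γ + ε) := le_mul_of_one_le_right hA hone
          have t2 : |C3| * B * x ^ ε ≤ |C3| * B * x ^ (γ + ε) :=
            mul_le_mul_of_nonneg_left hmono1 (by positivity)
          linarith
      _ = D * x ^ (γ + ε) := by rw [hDdef]; ring
  rw [hexp] at hchain
  have h5 : c * x ^ ε ≤ D := by
    by_contra hcon2
    push_neg at hcon2
    nlinarith
  have h6 : x ^ ε ≤ D / c := by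
    rw [le_div_iff₀ hc0]
    linarith
  linarith
end
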